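/- Under the CMES sampling setup with strata given by a coarser partition Z (with L' cells, cell weights q_1, …, q_{L'} ≥ 0 summing to 1, per-cell treatment ratios π_{k l'} for each rule k, and per-cell samples of sizes N_{k t l'}), the expected welfare u_Z of the MES rule conditional on Z satisfies U_{M*} − Σ_{k=1}^{m} exp(−2·Δ_{M*k}² / {Σ_{l'=1}^{L'} q_{l'}²·(A_{k l'} + A_{M* l'})})·Δ_{M*k} ≤ u_Z ≤ U_{M*}, where U_k := Σ_{l'} q_{l'}·[(1−π_{k l'})·μ_{k 0 l'} + π_{k l'}·μ_{k 1 l'}], M* maximizes U_k, Δ_{M*k} := U_{M*} − U_k, and A_{k l'} := (1−π_{k l'})²/N_{k 0 l'} + π_{k l'}²/N_{k 1 l'}. -/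

import Mathlib

open MeasureTheory ProbabilityTheory Finset

section HoeffdingAux
open Real

lemma hoeffding_aux (p : ℝ) (hp0 : 0 ≤ p) (hp1 : p ≤ 1) (h : ℝ) :
    (1 - p) * exp (-(p * h)) + p * exp ((1 - p) * h) ≤ exp (h ^ 2 / 8) := by
  set φ : ℝ → ℝ := fun x => (1 - p) + p * exp x with hφdef
  have hφ : ∀ x, 0 < φ x := by
    intro x
    rcases eq_or_lt_of_le hp0 with h0 | h0
    · simp [hφdef, ← h0]
    · have := exp_pos x
      have h2 : 0 < p * exp x := mul_pos h0 this
      simp only [hφdef]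
      nlinarith
  set L : ℝ → ℝ := fun x => -(p * x) + log (φ x) with hLdef
  set L' : ℝ → ℝ := fun x => -p + p * exp x / φ x with hL'def
  set g : ℝ → ℝ := fun x => x ^ 2 / 8 - L x with hgdef
  set g' : ℝ → ℝ := fun x => x / 4 - L' x with hg'def
  have hφd : ∀ x, HasDerivAt φ (p * exp x) x := by
    intro x
    exact ((Real.hasDerivAt_exp x).const_mul p).const_add (1 - p)
  have hLd : ∀ x, HasDerivAt L (L' x) x := by
    intro x
    have h1 : HasDerivAt (fun x : ℝ => -(p * x)) (-p) x := by
      exact (((hasDerivAt_id x).const_mul p).neg).congr_deriv (by ring)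
    have h2 : HasDerivAt (fun x => log (φ x)) (p * exp x / φ x) x :=
      (hφd x).log (hφ x).ne'
    exact h1.add h2
  have hgd : ∀ x, HasDerivAt g (g' x) x := by
    intro x
    have h1 : HasDerivAt (fun x : ℝ => x ^ 2 / 8) (x / 4) x := by
      have := (hasDerivAt_pow 2 x).div_const 8
      simpa using this.congr_deriv (by ring)
    exact h1.sub (hLd x)
  have hg'd : ∀ x, HasDerivAt g' (1 / 4 - p * exp x * (1 - p) / (φ x) ^ 2) x := by
    intro x
    have h1 : HasDerivAt (fun x : ℝ => x / 4) (1 / 4) x := by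
      simpa using (hasDerivAt_id x).div_const 4
    have h2 : HasDerivAt (fun x => p * exp x / φ x)
        ((p * exp x * φ x - p * exp x * (p * exp x)) / (φ x) ^ 2) x :=
      ((Real.hasDerivAt_exp x).const_mul p).div (hφd x) (hφ x).ne'
    have h3 : HasDerivAt L' ((p * exp x * φ x - p * exp x * (p * exp x)) / (φ x) ^ 2) x := by
      simpa [hL'def] using h2.const_add (-p)
    have hnum : p * exp x * φ x - p * exp x * (p * exp x) = p * exp x * (1 - p) := by
      have hx : φ x = (1 - p) + p * exp x := rfl
      rw [hx]; ring
    have h4 := h1.sub h3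
    rw [hnum] at h4
    exact h4
  have hg'nonneg : ∀ x, (0:ℝ) ≤ 1 / 4 - p * exp x * (1 - p) / (φ x) ^ 2 := by
    intro x
    have hφx := hφ x
    have hle : p * exp x * (1 - p) / (φ x) ^ 2 ≤ 1 / 4 := by
      rw [div_le_iff₀ (by positivity)]
      have hx : φ x = (1 - p) + p * exp x := rfl
      nlinarith [sq_nonneg ((1 - p) - p * exp x)]
    linarith
  have hg'mono : Monotone g' :=
    monotone_of_hasDerivAt_nonneg hg'd (fun x => hg'nonneg x)
  have hg'0 : g' 0 = 0 := by
    simp [hg'def, hL'def, hφdef]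
  have hg0 : g 0 = 0 := by
    simp [hgdef, hLdef, hφdef]
  have hgnonneg : 0 ≤ g h := by
    rcases le_or_gt 0 h with hh | hh
    · have hmono : MonotoneOn g (Set.Ici 0) := by
        refine monotoneOn_of_hasDerivWithinAt_nonneg (convex_Ici 0)
          (fun x _ => (hgd x).continuousAt.continuousWithinAt)
          (fun x hx => (hgd x).hasDerivWithinAt) (fun x hx => ?_)
        rw [← hg'0]
        exact hg'mono (le_of_lt (by simpa using hx))
      have := hmono (Set.self_mem_Ici) (Set.mem_Ici.2 hh) hh
      linarith [hg0 ▸ this]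
    · have hanti : AntitoneOn g (Set.Iic 0) := by
        refine antitoneOn_of_hasDerivWithinAt_nonpos (convex_Iic 0)
          (fun x _ => (hgd x).continuousAt.continuousWithinAt)
          (fun x hx => (hgd x).hasDerivWithinAt) (fun x hx => ?_)
        rw [← hg'0]
        exact hg'mono (le_of_lt (by simpa using hx))
      have := hanti (Set.mem_Iic.2 hh.le) (Set.self_mem_Iic) hh.le
      linarith [hg0 ▸ this]
  have hLle : L h ≤ h ^ 2 / 8 := by
    have : 0 ≤ h ^ 2 / 8 - L h := hgnonneg
    linarith
  have hexp : (1 - p) * exp (-(p * h)) + p * exp ((1 - p) * h) = exp (L h) := by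
    have h1 : exp (L h) = exp (-(p * h)) * φ h := by
      rw [hLdef]
      simp only
      rw [Real.exp_add, Real.exp_log (hφ h)]
    rw [h1]
    have hx : φ h = (1 - p) + p * exp h := rfl
    rw [hx, mul_add]
    rw [mul_comm (exp (-(p * h))) (1 - p), mul_comm (exp (-(p * h))) (p * exp h)]
    rw [mul_assoc, ← Real.exp_add]
    ring_nf
  rw [hexp]
  exact Real.exp_le_exp.2 hLle

lemma integrable_of_mem_Icc {Ω : Type*} [MeasurableSpace Ω] (P : Measure Ω)
    [IsProbabilityMeasure P] {X : Ω → ℝ} {a b : ℝ} (hX : Measurable X)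
    (hab : ∀ ω, X ω ∈ Set.Icc a b) : Integrable X P := by
  refine Integrable.mono' (integrable_const (|a| + |b|)) hX.aestronglyMeasurable
    (Filter.Eventually.of_forall fun ω => ?_)
  have h1 := (hab ω).1
  have h2 := (hab ω).2
  rw [Real.norm_eq_abs, abs_le]
  constructor
  · have h3 : -|a| ≤ a := neg_abs_le a
    have h4 : (0:ℝ) ≤ |b| := abs_nonneg b
    linarith
  · have h3 : b ≤ |b| := le_abs_self b
    have h4 : (0:ℝ) ≤ |a| := abs_nonneg a
    linarith

lemma integrable_exp_of_mem_Icc {Ω : Type*} [MeasurableSpace Ω] (P : Measure Ω)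
    [IsProbabilityMeasure P] {X : Ω → ℝ} {a b : ℝ} (hX : Measurable X)
    (hab : ∀ ω, X ω ∈ Set.Icc a b) (t : ℝ) :
    Integrable (fun ω => exp (t * X ω)) P := by
  refine Integrable.mono' (integrable_const (exp (|t| * (|a| + |b|))))
    ((hX.const_mul t).exp).aestronglyMeasurable (Filter.Eventually.of_forall fun ω => ?_)
  rw [Real.norm_eq_abs, abs_of_pos (exp_pos _), exp_le_exp]
  have h1 := (hab ω).1
  have h2 := (hab ω).2
  have hXub : |X ω| ≤ |a| + |b| := by
    rw [abs_le]
    constructor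
    · have := neg_abs_le a; have := abs_nonneg b; linarith
    · have := le_abs_self b; have := abs_nonneg a; linarith
  calc t * X ω ≤ |t * X ω| := le_abs_self _
    _ = |t| * |X ω| := abs_mul t (X ω)
    _ ≤ |t| * (|a| + |b|) := by
        exact mul_le_mul_of_nonneg_left hXub (abs_nonneg t)

/-- **Hoeffding's lemma**. -/
lemma hoeffding_lemma {Ω : Type*} [MeasurableSpace Ω] (P : Measure Ω)
    [IsProbabilityMeasure P] {X : Ω → ℝ} {a b : ℝ} (hX : Measurable X)
    (hab : ∀ ω, X ω ∈ Set.Icc a b) (hab' : a ≤ b) (t : ℝ) :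
    mgf X P t ≤ exp (t * (∫ ω, X ω ∂P) + t ^ 2 * (b - a) ^ 2 / 8) := by
  set μ0 := ∫ ω, X ω ∂P with hμ0
  rcases eq_or_lt_of_le hab' with heq | hlt
  · -- a = b : X is constant
    have hXa : ∀ ω, X ω = a := fun ω => le_antisymm (heq ▸ (hab ω).2) (hab ω).1
    have hμ0a : μ0 = a := by
      rw [hμ0]
      have : (fun ω => X ω) = fun _ => a := funext hXa
      rw [this, integral_const]
      simp
    have : mgf X P t = exp (t * a) := by
      rw [mgf]
      have : (fun ω => exp (t * X ω)) = fun _ => exp (t * a) := by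
        funext ω; rw [hXa ω]
      rw [this, integral_const]
      simp
    rw [this, hμ0a, ← heq]
    norm_num
  · -- a < b
    have hba : 0 < b - a := sub_pos.2 hlt
    have hXint : Integrable X P := integrable_of_mem_Icc P hX hab
    have hμ0a : a ≤ μ0 := by
      rw [hμ0]
      calc a = ∫ _, a ∂P := by simp
        _ ≤ ∫ ω, X ω ∂P := integral_mono (integrable_const a) hXint fun ω => (hab ω).1
    have hμ0b : μ0 ≤ b := by
      rw [hμ0]
      calc ∫ ω, X ω ∂P ≤ ∫ _, b ∂P := integral_mono hXint (integrable_const b) fun ω => (hab ω).2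
        _ = b := by simp
    set p := (μ0 - a) / (b - a) with hp
    have hp0 : 0 ≤ p := div_nonneg (by linarith) hba.le
    have hp1 : p ≤ 1 := by
      rw [hp, div_le_one hba]; linarith
    set c1 := (exp (t * b) - exp (t * a)) / (b - a) with hc1
    set c0 := (b * exp (t * a) - a * exp (t * b)) / (b - a) with hc0
    -- pointwise convexity bound
    have hpt : ∀ ω, exp (t * X ω) ≤ c1 * X ω + c0 := by
      intro ω
      set x := X ω with hx
      have hx1 := (hab ω).1
      have hx2 := (hab ω).2
      have hθ1 : (0:ℝ) ≤ (b - x) / (b - a) := div_nonneg (by linarith) hba.le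
      have hθ2 : (0:ℝ) ≤ (x - a) / (b - a) := div_nonneg (by linarith) hba.le
      have hθsum : (b - x) / (b - a) + (x - a) / (b - a) = 1 := by
        field_simp
        ring
      have hcvx := convexOn_exp.2 (Set.mem_univ (t * a)) (Set.mem_univ (t * b)) hθ1 hθ2 hθsum
      simp only [smul_eq_mul] at hcvx
      have harg : (b - x) / (b - a) * (t * a) + (x - a) / (b - a) * (t * b) = t * x := by
        field_simp
        ring
      rw [harg] at hcvx
      refine hcvx.trans (le_of_eq ?_)
      rw [hc1, hc0]
      field_simp
      ring
    have hint : ∫ ω, exp (t * X ω) ∂P ≤ c1 * μ0 + c0 := by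
      have hR : Integrable (fun ω => c1 * X ω + c0) P :=
        (hXint.const_mul c1).add (integrable_const c0)
      calc ∫ ω, exp (t * X ω) ∂P ≤ ∫ ω, (c1 * X ω + c0) ∂P :=
            integral_mono (integrable_exp_of_mem_Icc P hX hab t) hR hpt
        _ = c1 * μ0 + c0 := by
            rw [integral_add (hXint.const_mul c1) (integrable_const c0),
              integral_const_mul, integral_const]
            simp [hμ0]
    have hkey : c1 * μ0 + c0 = exp (t * μ0) * ((1 - p) * exp (-(p * (t * (b - a))))
        + p * exp ((1 - p) * (t * (b - a)))) := by
      have e1 : -(p * (t * (b - a))) = t * a - t * μ0 := by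
        rw [hp]; field_simp; ring
      have e2 : (1 - p) * (t * (b - a)) = t * b - t * μ0 := by
        rw [hp]; field_simp; ring
      rw [e1, e2, Real.exp_sub, Real.exp_sub, hc1, hc0, hp]
      field_simp
      ring
    have hmain := hoeffding_aux p hp0 hp1 (t * (b - a))
    calc mgf X P t = ∫ ω, exp (t * X ω) ∂P := rfl
      _ ≤ c1 * μ0 + c0 := hint
      _ = exp (t * μ0) * ((1 - p) * exp (-(p * (t * (b - a))))
          + p * exp ((1 - p) * (t * (b - a)))) := hkey
      _ ≤ exp (t * μ0) * exp ((t * (b - a)) ^ 2 / 8) := by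
          exact mul_le_mul_of_nonneg_left hmain (exp_pos _).le
      _ = exp (t * μ0 + t ^ 2 * (b - a) ^ 2 / 8) := by
          rw [← Real.exp_add]
          ring_nf

lemma iIndepFun_comp_right {Ω ι κ : Type*} [MeasurableSpace Ω] {P : Measure Ω}
    {f : ι → Ω → ℝ} (h : iIndepFun f P)
    (e : κ → ι) (he : Function.Injective e) [Nonempty κ] :
    iIndepFun (fun j => f (e j)) P := by
  rw [iIndepFun_iff_measure_inter_preimage_eq_mul] at h ⊢
  intro S sets hsets
  classical
  have hinv : ∀ j : κ, Function.invFun e (e j) = j :=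
    Function.leftInverse_invFun he
  set sets' : ι → Set ℝ := fun i => sets (Function.invFun e i) with hsets'
  have hmeas' : ∀ i, i ∈ S.image e → MeasurableSet (sets' i) := by
    intro i hi
    rcases Finset.mem_image.1 hi with ⟨j, hj, rfl⟩
    simp only [hsets', hinv j]
    exact hsets j hj
  have key := h (S.image e) hmeas'
  have hInter : (⋂ i ∈ S.image e, f i ⁻¹' sets' i) = ⋂ j ∈ S, f (e j) ⁻¹' sets j := by
    ext ω
    simp only [Set.mem_iInter, Finset.mem_image]
    constructor
    · intro hω j hj
      have := hω (e j) ⟨j, hj, rfl⟩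
      simpa only [hsets', hinv j] using this
    · rintro hω i ⟨j, hj, rfl⟩
      simp only [hsets', hinv j]
      exact hω j hj
  have hProd : (∏ i ∈ S.image e, P (f i ⁻¹' sets' i)) = ∏ j ∈ S, P (f (e j) ⁻¹' sets j) := by
    rw [Finset.prod_image (fun j _ k _ hjk => he hjk)]
    refine Finset.prod_congr rfl fun j hj => ?_
    simp only [hsets', hinv j]
  rw [hInter, hProd] at key
  exact key

/-- **Hoeffding's inequality** for sums of independent bounded random variables. -/
lemma hoeffding_inequality {Ω ι : Type*} [MeasurableSpace Ω] (P : Measure Ω)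
    [IsProbabilityMeasure P] (X : ι → Ω → ℝ)
    (hmeas : ∀ i, Measurable (X i))
    (hindep : iIndepFun X P)
    (a b : ι → ℝ) (hab : ∀ i ω, X i ω ∈ Set.Icc (a i) (b i))
    (s : Finset ι) (ε : ℝ) (hε : 0 < ε)
    {c : ℝ} (hc : c = ∑ i ∈ s, (b i - a i) ^ 2) (hc0 : 0 < c) :
    (P {ω | ε ≤ (∑ i ∈ s, X i ω) - ∑ i ∈ s, ∫ ω, X i ω ∂P}).toReal
      ≤ exp (-2 * ε ^ 2 / c) := by
  classical
  set m : ℝ := ∑ i ∈ s, ∫ ω, X i ω ∂P with hm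
  have hΩ : Nonempty Ω := by
    by_contra hne
    have hempty : (Set.univ : Set Ω) = ∅ := by
      rw [Set.eq_empty_iff_forall_notMem]
      intro x _
      exact hne ⟨x⟩
    have h1 := measure_univ (μ := P)
    rw [hempty] at h1
    simp at h1
  have hab' : ∀ i, a i ≤ b i := fun i =>
    le_trans (hab i (Classical.arbitrary Ω)).1 (hab i (Classical.arbitrary Ω)).2
  set t : ℝ := 4 * ε / c with ht
  have ht0 : 0 ≤ t := by positivity
  set Z : Ω → ℝ := fun ω => (∑ i ∈ s, X i ω) - m with hZ
  set W : Ω → ℝ := fun ω => ∑ i ∈ s, X i ω with hW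
  -- integrability of exp(t * Z)
  have hWmeas : Measurable W := by
    apply Finset.measurable_sum
    exact fun i _ => hmeas i
  have hWmem : ∀ ω, W ω ∈ Set.Icc (∑ i ∈ s, a i) (∑ i ∈ s, b i) := by
    intro ω
    constructor
    · exact Finset.sum_le_sum fun i _ => (hab i ω).1
    · exact Finset.sum_le_sum fun i _ => (hab i ω).2
  have hZmeas : Measurable Z := hWmeas.sub measurable_const
  have hZmem : ∀ ω, Z ω ∈ Set.Icc ((∑ i ∈ s, a i) - m) ((∑ i ∈ s, b i) - m) := by
    intro ω
    exact ⟨sub_le_sub_right (hWmem ω).1 m, sub_le_sub_right (hWmem ω).2 m⟩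
  have hZint : Integrable (fun ω => exp (t * Z ω)) P :=
    integrable_exp_of_mem_Icc P hZmeas hZmem t
  -- Chernoff
  have hcher := measure_ge_le_exp_mul_mgf (X := Z) (μ := P) ε ht0 hZint
  -- mgf of Z in terms of mgf of W
  have hmgfZ : mgf Z P t = exp (-(t * m)) * mgf W P t := by
    rw [mgf, mgf]
    simp only [hZ]
    have : ∀ ω, exp (t * (W ω - m)) = exp (-(t * m)) * exp (t * W ω) := by
      intro ω
      rw [← Real.exp_add]
      ring_nf
    simp only [hW] at this ⊢
    simp_rw [this]
    rw [integral_const_mul]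
  -- mgf of W via independence
  have hWsum : W = ∑ i ∈ s, X i := by
    funext ω; simp [hW]
  have hmgfW : mgf W P t = ∏ i ∈ s, mgf (X i) P t := by
    rw [hWsum]
    exact hindep.mgf_sum hmeas s
  have hmgfW_le : mgf W P t ≤ exp (t * m + t ^ 2 * c / 8) := by
    rw [hmgfW]
    calc (∏ i ∈ s, mgf (X i) P t)
        ≤ ∏ i ∈ s, exp (t * (∫ ω, X i ω ∂P) + t ^ 2 * (b i - a i) ^ 2 / 8) := by
          refine Finset.prod_le_prod (fun i _ => mgf_nonneg) (fun i _ => ?_)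
          exact hoeffding_lemma P (hmeas i) (hab i) (hab' i) t
      _ = exp (∑ i ∈ s, (t * (∫ ω, X i ω ∂P) + t ^ 2 * (b i - a i) ^ 2 / 8)) := by
          rw [Real.exp_sum]
      _ = exp (t * m + t ^ 2 * c / 8) := by
          congr 1
          have h8 : ∑ x ∈ s, t ^ 2 * (b x - a x) ^ 2 / 8
              = t ^ 2 * (∑ x ∈ s, (b x - a x) ^ 2) / 8 := by
            rw [Finset.mul_sum, Finset.sum_div]
          rw [Finset.sum_add_distrib, ← Finset.mul_sum, ← hm, h8, ← hc]
  have hfinal : exp (-t * ε) * mgf Z P t ≤ exp (-2 * ε ^ 2 / c) := by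
    rw [hmgfZ]
    have : exp (-t * ε) * (exp (-(t * m)) * mgf W P t)
        ≤ exp (-t * ε) * (exp (-(t * m)) * exp (t * m + t ^ 2 * c / 8)) := by
      have h1 : (0:ℝ) ≤ exp (-t * ε) := (exp_pos _).le
      have h2 : (0:ℝ) ≤ exp (-(t * m)) := (exp_pos _).le
      exact mul_le_mul_of_nonneg_left (mul_le_mul_of_nonneg_left hmgfW_le h2) h1
    refine this.trans (le_of_eq ?_)
    rw [← Real.exp_add, ← Real.exp_add]
    congr 1
    rw [ht]
    field_simp
    ring
  calc (P {ω | ε ≤ Z ω}).toReal ≤ exp (-t * ε) * mgf Z P t := hcher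
    _ ≤ exp (-2 * ε ^ 2 / c) := hfinal

end HoeffdingAux

/-- Under the CMES sampling setup with strata given by a coarser
partition `Z` (with `L'` cells, cell weights `q`, per-cell ratios `π` and samples of sizes
`N`), the expected welfare `u_Z` of the MES rule conditional on `Z` satisfies
`U_{M*} − Σ_k exp(−2·Δ_{M*k}² / Σ_{l'} q_{l'}²·(A_{k l'}+A_{M* l'}))·Δ_{M*k} ≤ u_Z ≤ U_{M*}`. -/
theorem cmes_coarse_partition_expected_welfare_bounds
    {Ω : Type*} [MeasurableSpace Ω] (P : Measure Ω) [IsProbabilityMeasure P]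
    (L' : ℕ) (hL' : 1 ≤ L')
    (q : Fin L' → ℝ) (hq : ∀ l, 0 ≤ q l) (hqsum : ∑ l, q l = 1)
    (m : ℕ) (hm : 1 ≤ m)
    (π : Fin m → Fin L' → ℝ) (hπ : ∀ k l, π k l ∈ Set.Icc (0 : ℝ) 1)
    (N : Fin m → Fin 2 → Fin L' → ℕ) (hN : ∀ k t l, 1 ≤ N k t l)
    (Y : Fin m → Fin 2 → Fin L' → ℕ → Ω → ℝ)
    (hmeas : ∀ k t l i, Measurable (Y k t l i))
    (hrange : ∀ k t l i ω, Y k t l i ω ∈ Set.Icc (0 : ℝ) 1)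
    (μ : Fin m → Fin 2 → Fin L' → ℝ)
    (hmean : ∀ k t l i, ∫ ω, Y k t l i ω ∂P = μ k t l)
    (hident : ∀ k t l i j, P.map (Y k t l i) = P.map (Y k t l j))
    (hindep : iIndepFun
      (fun q : Fin m × Fin 2 × Fin L' × ℕ => Y q.1 q.2.1 q.2.2.1 q.2.2.2) P)
    (Uhat : Fin m → Ω → ℝ)
    (hUhat : ∀ k ω, Uhat k ω
      = ∑ l, q l *
          ((1 - π k l) * ((N k 0 l : ℝ)⁻¹ * ∑ i ∈ Finset.range (N k 0 l), Y k 0 l i ω)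
            + π k l * ((N k 1 l : ℝ)⁻¹ * ∑ i ∈ Finset.range (N k 1 l), Y k 1 l i ω)))
    (U : Fin m → ℝ)
    (hU : ∀ k, U k = ∑ l, q l * ((1 - π k l) * μ k 0 l + π k l * μ k 1 l))
    (A : Fin m → Fin L' → ℝ)
    (hA : ∀ k l, A k l = (1 - π k l) ^ 2 / (N k 0 l : ℝ) + (π k l) ^ 2 / (N k 1 l : ℝ))
    (uZ : ℝ)
    (huZ : uZ = ∑ k, (P {ω | ∀ j, j ≠ k → Uhat j ω < Uhat k ω}).toReal * U k)
    (hties : ∀ j k, j ≠ k → P {ω | Uhat j ω = Uhat k ω} = 0)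
    (M : Fin m) (hM : ∀ k, U k ≤ U M) :
    U M - ∑ k, Real.exp (-2 * (U M - U k) ^ 2 / ∑ l, (q l) ^ 2 * (A k l + A M l))
        * (U M - U k) ≤ uZ
      ∧ uZ ≤ U M := by
  classical
  haveI hFinL : Nonempty (Fin L') := ⟨⟨0, hL'⟩⟩
  -- measurability of Uhat
  have hUhatmeas : ∀ k, Measurable (Uhat k) := by
    intro k
    have hfe : Uhat k = fun ω => ∑ l, q l *
        ((1 - π k l) * ((N k 0 l : ℝ)⁻¹ * ∑ i ∈ Finset.range (N k 0 l), Y k 0 l i ω)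
          + π k l * ((N k 1 l : ℝ)⁻¹ * ∑ i ∈ Finset.range (N k 1 l), Y k 1 l i ω)) :=
      funext (hUhat k)
    rw [hfe]
    apply Finset.measurable_sum
    intro l _
    refine Measurable.const_mul (Measurable.add ?_ ?_) (q l)
    · exact ((Finset.measurable_sum _ (fun i _ => hmeas k 0 l i)).const_mul _).const_mul _
    · exact ((Finset.measurable_sum _ (fun i _ => hmeas k 1 l i)).const_mul _).const_mul _
  -- the events
  set E : Fin m → Set Ω := fun k => {ω | ∀ j, j ≠ k → Uhat j ω < Uhat k ω} with hE
  have hEmeas : ∀ k, MeasurableSet (E k) := by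
    intro k
    have h1 : E k = ⋂ j, {ω | j ≠ k → Uhat j ω < Uhat k ω} := by
      ext ω; simp [hE]
    rw [h1]
    refine MeasurableSet.iInter fun j => ?_
    by_cases hj : j = k
    · have : {ω | j ≠ k → Uhat j ω < Uhat k ω} = Set.univ := by
        ext ω; simp [hj]
      rw [this]; exact MeasurableSet.univ
    · have : {ω | j ≠ k → Uhat j ω < Uhat k ω} = {ω | Uhat j ω < Uhat k ω} := by
        ext ω; simp [hj]
      rw [this]; exact measurableSet_lt (hUhatmeas j) (hUhatmeas k)
  have hdisj : ∀ j k : Fin m, j ≠ k → Disjoint (E j) (E k) := by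
    intro j k hjk
    rw [Set.disjoint_left]
    intro ω hωj hωk
    have h1 := hωj k (Ne.symm hjk)
    have h2 := hωk j hjk
    exact absurd h1 (not_lt.2 h2.le)
  -- the events cover up to a null set
  have hUnion : P (⋃ k ∈ Finset.univ, E k) = 1 := by
    have hSm : MeasurableSet (⋃ k ∈ Finset.univ, E k) :=
      MeasurableSet.biUnion (Set.to_countable _) fun k _ => hEmeas k
    have hcomplnull : P ((⋃ k ∈ Finset.univ, E k)ᶜ) = 0 := by
      have hsub : (⋃ k ∈ Finset.univ, E k)ᶜ ⊆
          ⋃ (j : Fin m), ⋃ (k : Fin m), ⋃ (_ : j ≠ k), {ω | Uhat j ω = Uhat k ω} := by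
        intro ω hω
        simp only [Set.mem_compl_iff, Set.mem_iUnion, Finset.mem_univ, Set.iUnion_true] at hω
        push_neg at hω
        obtain ⟨k₀, -, hk₀⟩ := Finset.exists_max_image Finset.univ (fun j => Uhat j ω)
          ⟨M, Finset.mem_univ M⟩
        have h1 : ¬ (∀ j, j ≠ k₀ → Uhat j ω < Uhat k₀ ω) := hω k₀
        push_neg at h1
        obtain ⟨j, hj, hle⟩ := h1
        have heq : Uhat j ω = Uhat k₀ ω :=
          le_antisymm (hk₀ j (Finset.mem_univ j)) hle
        simp only [Set.mem_iUnion]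
        exact ⟨j, k₀, hj, heq⟩
      exact measure_mono_null hsub
        (measure_iUnion_null fun j => measure_iUnion_null fun k =>
          measure_iUnion_null fun hjk => hties j k hjk)
    have hc := measure_compl hSm (measure_ne_top P _)
    rw [hcomplnull, measure_univ] at hc
    have hle1 : P (⋃ k ∈ Finset.univ, E k) ≤ 1 := prob_le_one
    have hge1 : (1:ENNReal) ≤ P (⋃ k ∈ Finset.univ, E k) := by
      rw [← tsub_eq_zero_iff_le]
      exact hc.symm
    exact le_antisymm hle1 hge1
  have hsum1 : ∑ k, (P (E k)).toReal = 1 := by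
    have hdPU : P (⋃ k ∈ Finset.univ, E k) = ∑ k, P (E k) :=
      measure_biUnion_finset (fun j _ k _ hjk => hdisj j k hjk) (fun k _ => hEmeas k)
    rw [← ENNReal.toReal_sum (fun k _ => measure_ne_top P _), ← hdPU, hUnion,
      ENNReal.toReal_one]
  have hpnn : ∀ k, 0 ≤ (P (E k)).toReal := fun k => ENNReal.toReal_nonneg
  -- key Hoeffding bound
  -- a helper for truncated range sums
  have sum_range_ite : ∀ (Mn Nn : ℕ) (f : ℕ → ℝ), Mn ≤ Nn →
      ∑ i ∈ Finset.range Nn, (if i < Mn then f i else 0) = ∑ i ∈ Finset.range Mn, f i := by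
    intro Mn Nn f h
    have h1 : ∑ i ∈ Finset.range Mn, (if i < Mn then f i else 0)
        = ∑ i ∈ Finset.range Nn, (if i < Mn then f i else 0) :=
      Finset.sum_subset (Finset.range_subset_range.2 h)
        (fun x _ hx => if_neg (by simpa using hx))
    rw [← h1]
    exact Finset.sum_congr rfl fun i hi => if_pos (Finset.mem_range.1 hi)
  have hμmem : ∀ k t l, μ k t l ∈ Set.Icc (0:ℝ) 1 := by
    intro k t l
    have h0 := hmean k t l 0
    have hint := integrable_of_mem_Icc P (hmeas k t l 0) (hrange k t l 0)
    constructor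
    · rw [← h0]
      have := integral_mono (integrable_const (0:ℝ)) hint (fun ω => (hrange k t l 0 ω).1)
      simpa using this
    · rw [← h0]
      have := integral_mono hint (integrable_const (1:ℝ)) (fun ω => (hrange k t l 0 ω).2)
      simpa using this
  have hkey : ∀ k : Fin m, 0 < U M - U k → (P (E k)).toReal ≤
      Real.exp (-2 * (U M - U k) ^ 2 / ∑ l, (q l) ^ 2 * (A k l + A M l)) := by
    intro k hD
    have hkM : k ≠ M := by
      intro h; rw [h] at hD; simp at hD
    set km : Fin 2 → Fin m := fun r => if r = 0 then k else M with hkm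
    have hkm0 : km 0 = k := if_pos rfl
    have hkm1 : km 1 = M := if_neg (by decide)
    have hfin2 : ∀ z : Fin 2, z ≠ 0 → z = 1 := by decide
    have hkminj : Function.Injective km := by
      intro x y hxy
      by_cases hx : x = 0 <;> by_cases hy : y = 0
      · rw [hx, hy]
      · exfalso
        rw [hkm] at hxy
        simp only [if_pos hx, if_neg hy] at hxy
        exact hkM hxy
      · exfalso
        rw [hkm] at hxy
        simp only [if_pos hy, if_neg hx] at hxy
        exact hkM hxy.symm
      · rw [hfin2 x hx, hfin2 y hy]
    set sgn : Fin 2 → ℝ := fun r => if r = 0 then 1 else -1 with hsgn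
    set w : Fin m → Fin 2 → Fin L' → ℝ :=
      fun r t l => q l * (if t = 0 then 1 - π r l else π r l) / (N r t l) with hw
    set coef : Fin 2 × Fin 2 × Fin L' × ℕ → ℝ :=
      fun j => sgn j.1 * w (km j.1) j.2.1 j.2.2.1 with hcoef
    set X : Fin 2 × Fin 2 × Fin L' × ℕ → Ω → ℝ :=
      fun j ω => coef j * Y (km j.1) j.2.1 j.2.2.1 j.2.2.2 ω with hXdef
    set Nb : ℕ := Finset.univ.sup (fun x : Fin m × Fin 2 × Fin L' => N x.1 x.2.1 x.2.2) with hNb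
    have hNle : ∀ r t l, N r t l ≤ Nb := by
      intro r t l
      rw [hNb]
      exact Finset.le_sup (f := fun x : Fin m × Fin 2 × Fin L' => N x.1 x.2.1 x.2.2)
        (Finset.mem_univ (r, t, l))
    set s : Finset (Fin 2 × Fin 2 × Fin L' × ℕ) :=
      Finset.filter (fun j => j.2.2.2 < N (km j.1) j.2.1 j.2.2.1)
        (Finset.univ ×ˢ Finset.univ ×ˢ Finset.univ ×ˢ Finset.range Nb) with hs
    have hsum_s : ∀ g : Fin 2 × Fin 2 × Fin L' × ℕ → ℝ,
        ∑ j ∈ s, g j = ∑ r : Fin 2, ∑ t : Fin 2, ∑ l : Fin L',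
          ∑ i ∈ Finset.range (N (km r) t l), g (r, t, l, i) := by
      intro g
      rw [hs, Finset.sum_filter]
      simp only [Finset.sum_product]
      refine Finset.sum_congr rfl fun r _ => ?_
      refine Finset.sum_congr rfl fun t _ => ?_
      refine Finset.sum_congr rfl fun l _ => ?_
      exact sum_range_ite _ _ _ (hNle (km r) t l)
    -- positivity of N as reals
    have hNpos : ∀ r t l, (0:ℝ) < (N r t l : ℝ) := by
      intro r t l
      exact_mod_cast Nat.lt_of_lt_of_le Nat.zero_lt_one (hN r t l)
    -- bounds for X
    set a : Fin 2 × Fin 2 × Fin L' × ℕ → ℝ := fun j => min (coef j) 0 with ha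
    set b : Fin 2 × Fin 2 × Fin L' × ℕ → ℝ := fun j => max (coef j) 0 with hb
    have hXmem : ∀ j ω, X j ω ∈ Set.Icc (a j) (b j) := by
      intro j ω
      have hy := hrange (km j.1) j.2.1 j.2.2.1 j.2.2.2 ω
      simp only [hXdef, ha, hb, Set.mem_Icc]
      rcases le_total 0 (coef j) with hc | hc
      · constructor
        · exact (min_le_right _ 0).trans (mul_nonneg hc hy.1)
        · refine le_trans ?_ (le_max_left _ 0)
          nlinarith [hy.2]
      · constructor
        · refine le_trans (min_le_left _ 0) ?_
          nlinarith [hy.2]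
        · exact le_trans (mul_nonpos_of_nonpos_of_nonneg hc hy.1) (le_max_right _ 0)
    have hwidth : ∀ j, b j - a j = |coef j| := by
      intro j
      rw [hb, ha]
      simp only
      rw [max_sub_min_eq_abs]
      simp
    have hXmeas : ∀ j, Measurable (X j) :=
      fun j => (hmeas (km j.1) j.2.1 j.2.2.1 j.2.2.2).const_mul _
    -- independence of the family X
    have hindepX : iIndepFun X P := by
      set e : Fin 2 × Fin 2 × Fin L' × ℕ → Fin m × Fin 2 × Fin L' × ℕ :=
        fun j => (km j.1, j.2.1, j.2.2.1, j.2.2.2) with he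
      have heinj : Function.Injective e := by
        rintro ⟨x1, x2, x3, x4⟩ ⟨y1, y2, y3, y4⟩ hxy
        simp only [he, Prod.mk.injEq] at hxy
        obtain ⟨h1, h2, h3, h4⟩ := hxy
        exact Prod.ext (hkminj h1) (Prod.ext h2 (Prod.ext h3 h4))
      have h1 := iIndepFun_comp_right hindep e heinj
      have h2 := h1.comp (fun j => fun x : ℝ => coef j * x)
        (fun j => measurable_id.const_mul _)
      exact h2
    -- mean of X
    have hXmean : ∀ j, ∫ ω, X j ω ∂P = coef j * μ (km j.1) j.2.1 j.2.2.1 := by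
      intro j
      rw [hXdef]
      simp only
      rw [integral_const_mul, hmean]
    -- per-rule sum identities
    have hpartU : ∀ ω : Ω, ∀ r' : Fin m, (∑ t : Fin 2, ∑ l : Fin L',
        ∑ i ∈ Finset.range (N r' t l), w r' t l * Y r' t l i ω) = Uhat r' ω := by
      intro ω r'
      rw [hUhat r', Fin.sum_univ_two, ← Finset.sum_add_distrib]
      refine Finset.sum_congr rfl fun l _ => ?_
      rw [← Finset.mul_sum, ← Finset.mul_sum]
      have hn0 := (hNpos r' 0 l).ne'
      have hn1 := (hNpos r' 1 l).ne'
      simp only [hw, if_pos rfl, if_true, if_neg (show (1:Fin 2) ≠ 0 by decide)]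
      field_simp
    have hpartMean : ∀ r' : Fin m, (∑ t : Fin 2, ∑ l : Fin L',
        ∑ i ∈ Finset.range (N r' t l), w r' t l * μ r' t l) = U r' := by
      intro r'
      rw [hU r', Fin.sum_univ_two, ← Finset.sum_add_distrib]
      refine Finset.sum_congr rfl fun l _ => ?_
      rw [Finset.sum_const, Finset.card_range, Finset.sum_const, Finset.card_range,
        nsmul_eq_mul, nsmul_eq_mul]
      have hn0 := (hNpos r' 0 l).ne'
      have hn1 := (hNpos r' 1 l).ne'
      simp only [hw, if_pos rfl, if_true, if_neg (show (1:Fin 2) ≠ 0 by decide)]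
      field_simp
    have hpartA : ∀ r' : Fin m, (∑ t : Fin 2, ∑ l : Fin L',
        ∑ i ∈ Finset.range (N r' t l), (w r' t l) ^ 2) = ∑ l, (q l) ^ 2 * A r' l := by
      intro r'
      rw [Fin.sum_univ_two, ← Finset.sum_add_distrib]
      refine Finset.sum_congr rfl fun l _ => ?_
      rw [Finset.sum_const, Finset.card_range, Finset.sum_const, Finset.card_range,
        nsmul_eq_mul, nsmul_eq_mul]
      have hn0 := (hNpos r' 0 l).ne'
      have hn1 := (hNpos r' 1 l).ne'
      simp only [hw, if_pos rfl, if_true, if_neg (show (1:Fin 2) ≠ 0 by decide)]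
      rw [hA]
      field_simp
    -- sum identities for X
    have hsgn0 : sgn 0 = 1 := if_pos rfl
    have hsgn1 : sgn 1 = -1 := if_neg (by decide)
    have hsumX : ∀ ω, ∑ j ∈ s, X j ω = Uhat k ω - Uhat M ω := by
      intro ω
      rw [hsum_s (fun j => X j ω), Fin.sum_univ_two]
      have h0 : (∑ t : Fin 2, ∑ l : Fin L',
          ∑ i ∈ Finset.range (N (km 0) t l), X (0, t, l, i) ω) = Uhat k ω := by
        rw [← hkm0, ← hpartU ω (km 0)]
        refine Finset.sum_congr rfl fun t _ => Finset.sum_congr rfl fun l _ =>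
          Finset.sum_congr rfl fun i _ => ?_
        simp only [hXdef, hcoef, hsgn0]
        ring
      have h1 : (∑ t : Fin 2, ∑ l : Fin L',
          ∑ i ∈ Finset.range (N (km 1) t l), X (1, t, l, i) ω) = -Uhat M ω := by
        rw [← hkm1, ← hpartU ω (km 1)]
        rw [← Finset.sum_neg_distrib]
        refine Finset.sum_congr rfl fun t _ => ?_
        rw [← Finset.sum_neg_distrib]
        refine Finset.sum_congr rfl fun l _ => ?_
        rw [← Finset.sum_neg_distrib]
        refine Finset.sum_congr rfl fun i _ => ?_
        simp only [hXdef, hcoef, hsgn1]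
        ring
      rw [h0, h1]
      ring
    have hsumMean : ∑ j ∈ s, ∫ ω, X j ω ∂P = U k - U M := by
      have hcongr : ∑ j ∈ s, ∫ ω, X j ω ∂P
          = ∑ j ∈ s, coef j * μ (km j.1) j.2.1 j.2.2.1 :=
        Finset.sum_congr rfl fun j _ => hXmean j
      rw [hcongr, hsum_s (fun j => coef j * μ (km j.1) j.2.1 j.2.2.1), Fin.sum_univ_two]
      have h0 : (∑ t : Fin 2, ∑ l : Fin L', ∑ i ∈ Finset.range (N (km 0) t l),
          coef (0, t, l, i) * μ (km 0) t l) = U k := by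
        rw [← hkm0, ← hpartMean (km 0)]
        refine Finset.sum_congr rfl fun t _ => Finset.sum_congr rfl fun l _ =>
          Finset.sum_congr rfl fun i _ => ?_
        simp only [hcoef, hsgn0]
        ring
      have h1 : (∑ t : Fin 2, ∑ l : Fin L', ∑ i ∈ Finset.range (N (km 1) t l),
          coef (1, t, l, i) * μ (km 1) t l) = -(U M) := by
        rw [← hkm1, ← hpartMean (km 1)]
        rw [← Finset.sum_neg_distrib]
        refine Finset.sum_congr rfl fun t _ => ?_
        rw [← Finset.sum_neg_distrib]
        refine Finset.sum_congr rfl fun l _ => ?_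
        rw [← Finset.sum_neg_distrib]
        refine Finset.sum_congr rfl fun i _ => ?_
        simp only [hcoef, hsgn1]
        ring
      rw [h0, h1]
      ring
    have hsumSq : ∑ j ∈ s, (b j - a j) ^ 2 = ∑ l, (q l) ^ 2 * (A k l + A M l) := by
      have hcongr : ∑ j ∈ s, (b j - a j) ^ 2 = ∑ j ∈ s, (coef j) ^ 2 :=
        Finset.sum_congr rfl fun j _ => by rw [hwidth j, sq_abs]
      rw [hcongr, hsum_s (fun j => (coef j) ^ 2), Fin.sum_univ_two]
      have h0 : (∑ t : Fin 2, ∑ l : Fin L', ∑ i ∈ Finset.range (N (km 0) t l),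
          (coef (0, t, l, i)) ^ 2) = ∑ l, (q l) ^ 2 * A (km 0) l := by
        rw [← hpartA (km 0)]
        refine Finset.sum_congr rfl fun t _ => Finset.sum_congr rfl fun l _ =>
          Finset.sum_congr rfl fun i _ => ?_
        simp only [hcoef, hsgn0]
        ring
      have h1 : (∑ t : Fin 2, ∑ l : Fin L', ∑ i ∈ Finset.range (N (km 1) t l),
          (coef (1, t, l, i)) ^ 2) = ∑ l, (q l) ^ 2 * A (km 1) l := by
        rw [← hpartA (km 1)]
        refine Finset.sum_congr rfl fun t _ => Finset.sum_congr rfl fun l _ =>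
          Finset.sum_congr rfl fun i _ => ?_
        simp only [hcoef, hsgn1]
        ring
      rw [h0, h1, hkm0, hkm1, ← Finset.sum_add_distrib]
      exact Finset.sum_congr rfl fun l _ => by ring
    -- positivity of the variance proxy
    have hApos : ∀ r' l, 0 < A r' l := by
      intro r' l
      rw [hA]
      rcases lt_or_ge (π r' l) 1 with h1 | h1
      · have hfirst : 0 < (1 - π r' l) ^ 2 / (N r' 0 l : ℝ) :=
          div_pos (pow_pos (by linarith) 2) (hNpos r' 0 l)
        have hsecond : 0 ≤ (π r' l) ^ 2 / (N r' 1 l : ℝ) :=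
          div_nonneg (sq_nonneg _) (hNpos r' 1 l).le
        linarith
      · have hπ1 : π r' l = 1 := le_antisymm (hπ r' l).2 h1
        have hsecond : 0 < (π r' l) ^ 2 / (N r' 1 l : ℝ) := by
          rw [hπ1]; simpa using div_pos one_pos (hNpos r' 1 l)
        have hfirst : 0 ≤ (1 - π r' l) ^ 2 / (N r' 0 l : ℝ) :=
          div_nonneg (sq_nonneg _) (hNpos r' 0 l).le
        linarith
    have hc0 : 0 < ∑ l, (q l) ^ 2 * (A k l + A M l) := by
      obtain ⟨l0, hl0⟩ : ∃ l, 0 < q l := by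
        by_contra hcon
        push_neg at hcon
        have hz : ∑ l, q l = 0 :=
          Finset.sum_eq_zero fun l _ => le_antisymm (hcon l) (hq l)
        rw [hqsum] at hz
        norm_num at hz
      have hterm : 0 < (q l0) ^ 2 * (A k l0 + A M l0) := by
        have := hApos k l0
        have := hApos M l0
        positivity
      refine lt_of_lt_of_le hterm ?_
      refine Finset.single_le_sum (f := fun l => (q l) ^ 2 * (A k l + A M l)) (fun l _ => ?_) (Finset.mem_univ l0)
      have := hApos k l
      have := hApos M l
      positivity
    -- apply Hoeffding
    have hhoef := hoeffding_inequality P X hXmeas hindepX a b hXmem s (U M - U k) hD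
      hsumSq.symm hc0
    -- event inclusion
    have hsub : E k ⊆ {ω | U M - U k ≤ (∑ j ∈ s, X j ω) - ∑ j ∈ s, ∫ ω, X j ω ∂P} := by
      intro ω hω
      have hlt : Uhat M ω < Uhat k ω := hω M (Ne.symm hkM)
      simp only [Set.mem_setOf_eq]
      rw [hsumX ω, hsumMean]
      linarith
    calc (P (E k)).toReal
        ≤ (P {ω | U M - U k ≤ (∑ j ∈ s, X j ω) - ∑ j ∈ s, ∫ ω, X j ω ∂P}).toReal :=
          ENNReal.toReal_mono (measure_ne_top P _) (measure_mono hsub)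
      _ ≤ Real.exp (-2 * (U M - U k) ^ 2 / ∑ l, (q l) ^ 2 * (A k l + A M l)) := hhoef
  -- conclusion
  have huZ' : uZ = ∑ k, (P (E k)).toReal * U k := huZ
  have hupper : uZ ≤ U M := by
    rw [huZ']
    calc ∑ k, (P (E k)).toReal * U k ≤ ∑ k, (P (E k)).toReal * U M :=
          Finset.sum_le_sum fun k _ => mul_le_mul_of_nonneg_left (hM k) (hpnn k)
      _ = U M := by rw [← Finset.sum_mul, hsum1, one_mul]
  have hlow : U M - uZ
      ≤ ∑ k, Real.exp (-2 * (U M - U k) ^ 2 / ∑ l, (q l) ^ 2 * (A k l + A M l))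
          * (U M - U k) := by
    have h1 : U M - uZ = ∑ k, (P (E k)).toReal * (U M - U k) := by
      rw [huZ']
      have : ∑ k, (P (E k)).toReal * (U M - U k)
          = (∑ k, (P (E k)).toReal * U M) - ∑ k, (P (E k)).toReal * U k := by
        rw [← Finset.sum_sub_distrib]
        exact Finset.sum_congr rfl fun k _ => by ring
      rw [this, ← Finset.sum_mul, hsum1, one_mul]
    rw [h1]
    refine Finset.sum_le_sum fun k _ => ?_
    rcases eq_or_lt_of_le (sub_nonneg.2 (hM k)) with h0 | hpos
    · rw [← h0, mul_zero, mul_zero]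
    · exact mul_le_mul_of_nonneg_right (hkey k hpos) hpos.le
  exact ⟨by linarith, hupper⟩
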